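/- Let ν be a Borel probability measure on [0,1]² satisfying ∫(f(x)−f(y))dν = 0 for all continuous f : [0,1] → ℝ. Then for ν-almost every point (x,y) ∈ supp(ν), there exists z ∈ [0,1] such that (z,x) ∈ supp(ν). -/

import Mathlib

open MeasureTheory unitInterval

/-- topological support of a measure -/
def measSupp {X : Type*} [TopologicalSpace X] [MeasurableSpace X]
    (ν : Measure X) : Set X := {p | ∀ U : Set X, IsOpen U → p ∈ U → 0 < ν U}

lemma measSupp_compl_null {X : Type*} [TopologicalSpace X] [MeasurableSpace X]
    [SecondCountableTopology X] (ν : Measure X) : ν (measSupp ν)ᶜ = 0 := by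
  obtain ⟨B, hBc, hB⟩ := TopologicalSpace.exists_countable_basis X
  have hsub : (measSupp ν)ᶜ ⊆ ⋃ V ∈ {V ∈ B | ν V = 0}, V := by
    intro x hx
    simp only [Set.mem_compl_iff, measSupp, Set.mem_setOf_eq, not_forall] at hx
    obtain ⟨U, hU, hxU, hνU⟩ := hx
    obtain ⟨V, hVB, hxV, hVU⟩ := hB.2.isOpen_iff.mp hU x hxU
    refine Set.mem_biUnion ⟨hVB, le_antisymm ?_ zero_le⟩ hxV
    calc ν V ≤ ν U := measure_mono hVU
    _ = 0 := by simpa using hνU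
  refine measure_mono_null hsub ?_
  exact (measure_biUnion_null_iff (hBc.mono (Set.sep_subset _ _))).mpr fun V hV => hV.2

lemma isClosed_measSupp {X : Type*} [TopologicalSpace X] [MeasurableSpace X]
    (ν : Measure X) : IsClosed (measSupp ν) := by
  rw [← isOpen_compl_iff, isOpen_iff_forall_mem_open]
  intro x hx
  simp only [Set.mem_compl_iff, measSupp, Set.mem_setOf_eq, not_forall] at hx
  obtain ⟨U, hU, hxU, hνU⟩ := hx
  exact ⟨U, fun y hy hy' => hνU (hy' U hU hy), hU, hxU⟩

/-- if ν is a probability measure on [0,1]² with equal marginals, then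
for ν-a.e. (x,y) ∈ supp ν there is z with (z,x) ∈ supp ν. -/
theorem stmt13 (ν : Measure (I × I)) [IsProbabilityMeasure ν]
    (hν : ∀ f : C(I, ℝ), ∫ p, (f p.1 - f p.2) ∂ν = 0) :
    ∀ᵐ p ∂ν, p ∈ measSupp ν → ∃ z : I, (z, p.1) ∈ measSupp ν := by
  set μ₁ := ν.map Prod.fst with hμ₁
  set μ₂ := ν.map Prod.snd with hμ₂
  have hfst : Measurable (Prod.fst : I × I → I) := measurable_fst
  have hsnd : Measurable (Prod.snd : I × I → I) := measurable_snd
  have hint : ∀ f : C(I, ℝ), ∫ x, f x ∂μ₁ = ∫ x, f x ∂μ₂ := by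
    intro f
    rw [hμ₁, hμ₂, integral_map hfst.aemeasurable
        f.continuous.measurable.aestronglyMeasurable,
      integral_map hsnd.aemeasurable f.continuous.measurable.aestronglyMeasurable]
    have h1 : Integrable (fun p : I × I => f p.1) ν :=
      (f.continuous.comp continuous_fst).integrable_of_hasCompactSupport (HasCompactSupport.of_compactSpace _)
    have h2 : Integrable (fun p : I × I => f p.2) ν :=
      (f.continuous.comp continuous_snd).integrable_of_hasCompactSupport (HasCompactSupport.of_compactSpace _)
    have h := hν f
    rw [integral_sub h1 h2, sub_eq_zero] at h
    exact h
  have hfin1 : IsFiniteMeasure μ₁ := by rw [hμ₁]; exact Measure.isFiniteMeasure_map ν _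
  have hfin2 : IsFiniteMeasure μ₂ := by rw [hμ₂]; exact Measure.isFiniteMeasure_map ν _
  have hμeq : μ₁ = μ₂ := by
    refine ext_of_forall_lintegral_eq_of_IsFiniteMeasure fun f => ?_
    set g : C(I, ℝ) := ⟨fun x => (f x : ℝ), by continuity⟩ with hg
    have hi1 : Integrable (fun x => (f x : ℝ)) μ₁ := g.continuous.integrable_of_hasCompactSupport (HasCompactSupport.of_compactSpace _)
    have hi2 : Integrable (fun x => (f x : ℝ)) μ₂ := g.continuous.integrable_of_hasCompactSupport (HasCompactSupport.of_compactSpace _)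
    rw [lintegral_coe_eq_integral f hi1, lintegral_coe_eq_integral f hi2]
    exact congrArg ENNReal.ofReal (hint g)
  -- Let S be the image of the support under snd; it is closed.
  set S : Set I := Prod.snd '' measSupp ν with hS
  have hScl : IsClosed S :=
    ((isClosed_measSupp ν).isCompact.image continuous_snd).isClosed
  have hkey : ν {p : I × I | p.1 ∉ S} = 0 := by
    have : {p : I × I | p.1 ∉ S} = Prod.fst ⁻¹' Sᶜ := rfl
    rw [this, ← Measure.map_apply hfst hScl.measurableSet.compl, ← hμ₁, hμeq, hμ₂,
      Measure.map_apply hsnd hScl.measurableSet.compl]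
    refine measure_mono_null ?_ (measSupp_compl_null ν)
    intro p hp hps
    exact hp (⟨p, hps, rfl⟩ : p.2 ∈ S)
  filter_upwards [measure_eq_zero_iff_ae_notMem.mp hkey] with p hp _
  obtain ⟨q, hq, hq2⟩ := not_not.mp hp
  exact ⟨q.1, by rwa [← hq2, Prod.mk.eta]⟩
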